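/- For any good ideal I in K[x_1,…,x_n] there exists a finite partition of ℕ^n into cones such that whenever (a_1,…,a_n) and (b_1,…,b_n) lie in the same cone of the partition, I_{a_1,…,a_n} = I_{b_1,…,b_n}. -/

import Mathlib

open MvPolynomial

namespace GasanovaRR

/-- The monomial `x^α` in `K[x_1,…,x_n]`. -/
noncomputable def mono (K : Type*) [Field K] {n : ℕ} (α : Fin n → ℕ) :
    MvPolynomial (Fin n) K :=
  MvPolynomial.monomial (Finsupp.equivFunOnFinite.symm α) 1

/-- `I` is a monomial ideal: it is generated by a set of monomials. -/
def IsMonomialIdeal {K : Type*} [Field K] {n : ℕ}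
    (I : Ideal (MvPolynomial (Fin n) K)) : Prop :=
  ∃ A : Set (Fin n → ℕ), I = Ideal.span (mono K '' A)

/-- `x^α` is a minimal monomial generator of `I`, i.e. `x^α ∈ G(I)`:
`x^α ∈ I` and no monomial in `I` strictly divides it. -/
def IsMinGen {K : Type*} [Field K] {n : ℕ}
    (I : Ideal (MvPolynomial (Fin n) K)) (α : Fin n → ℕ) : Prop :=
  mono K α ∈ I ∧ ∀ β : Fin n → ℕ, mono K β ∈ I → β ≤ α → β = α

/-- The point `α` lies in the box `B_{a_1,…,a_n}` (for box sizes `d_1,…,d_n`). -/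
def InBox {n : ℕ} (d a α : Fin n → ℕ) : Prop :=
  ∀ i, a i * d i ≤ α i ∧ α i ≤ (a i + 1) * d i

/-- `I` is a good ideal (w.r.t. box sizes `d`): for every `l ≥ 1`, every minimal
generator of `I^l` lies in a box whose coordinate sum is `l - 1`. -/
def IsGood {K : Type*} [Field K] {n : ℕ}
    (I : Ideal (MvPolynomial (Fin n) K)) (d : Fin n → ℕ) : Prop :=
  ∀ l : ℕ, 1 ≤ l → ∀ α : Fin n → ℕ, IsMinGen (I ^ l) α →
    ∃ a : Fin n → ℕ, InBox d a α ∧ ∑ i, a i = l - 1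

/-- `I` is an `𝔪`-primary monomial ideal whose minimal generating set contains
`μ_i = x_i^{d_i}` with `d_i > 0` for each `i`. -/
def MPrimaryWithCorners {K : Type*} [Field K] {n : ℕ}
    (I : Ideal (MvPolynomial (Fin n) K)) (d : Fin n → ℕ) : Prop :=
  IsMonomialIdeal I ∧ I ≠ ⊤ ∧ (∀ i, 0 < d i) ∧ ∀ i, IsMinGen I (Pi.single i (d i))

/-- The ideal `I_{a_1,…,a_n}` associated to the box `B_{a_1,…,a_n}`, generated by
`m / (μ_1^{a_1}⋯μ_n^{a_n})` for `m ∈ B_{a_1,…,a_n} ∩ G(I^l)`, `l = a_1+⋯+a_n+1`. -/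
noncomputable def boxIdeal {K : Type*} [Field K] {n : ℕ}
    (I : Ideal (MvPolynomial (Fin n) K)) (d a : Fin n → ℕ) :
    Ideal (MvPolynomial (Fin n) K) :=
  Ideal.span ((fun α => mono K (α - fun i => a i * d i)) ''
    {α | InBox d a α ∧ IsMinGen (I ^ (∑ i, a i + 1)) α})

/-- The Ratliff–Rush closure `Ĩ = ⋃_{k ≥ 0} (I^{k+1} : I^k)`. -/
noncomputable def ratliffRush {K : Type*} [Field K] {n : ℕ}
    (I : Ideal (MvPolynomial (Fin n) K)) : Ideal (MvPolynomial (Fin n) K) :=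
  ⨆ k : ℕ, (I ^ (k + 1)).colon ((I ^ k : Ideal (MvPolynomial (Fin n) K)) : Set (MvPolynomial (Fin n) K))

/-- The cone in `ℕ^n` with set `S` of fixed coordinates and vertex `v`. -/
def Cone {n : ℕ} (S : Set (Fin n)) (v : Fin n → ℕ) : Set (Fin n → ℕ) :=
  {b | (∀ i ∈ S, b i = v i) ∧ ∀ i ∉ S, v i ≤ b i}

/-- `I` is a very good ideal: it is good and `I_{a_1,…,a_n} = I` for all boxes. -/
def IsVeryGood {K : Type*} [Field K] {n : ℕ}
    (I : Ideal (MvPolynomial (Fin n) K)) (d : Fin n → ℕ) : Prop :=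
  IsGood I d ∧ ∀ a : Fin n → ℕ, boxIdeal I d a = I

/- ===== auxiliary lemmas ===== -/
section Aux

variable {K : Type*} [Field K] {n : ℕ}

lemma mono_mul (α β : Fin n → ℕ) : mono K α * mono K β = mono K (α + β) := by
  unfold mono
  have h : Finsupp.equivFunOnFinite.symm (α + β)
      = Finsupp.equivFunOnFinite.symm α + Finsupp.equivFunOnFinite.symm β := by ext i; simp
  rw [monomial_mul, one_mul, h]

lemma mono_zero : mono K (0 : Fin n → ℕ) = 1 := by
  unfold mono
  have h0 : Finsupp.equivFunOnFinite.symm (0 : Fin n → ℕ) = 0 := by ext i; simp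
  rw [h0, monomial_zero', C_1]

lemma mono_pow (α : Fin n → ℕ) (k : ℕ) : (mono K α) ^ k = mono K (fun j => k * α j) := by
  induction k with
  | zero => simp only [pow_zero, zero_mul]; exact mono_zero.symm
  | succ k ih =>
    rw [pow_succ, ih, mono_mul]
    congr 1; funext j; simp [Pi.add_apply]; ring

lemma mono_mem_of_le {J : Ideal (MvPolynomial (Fin n) K)} {α β : Fin n → ℕ}
    (h : mono K α ∈ J) (hle : α ≤ β) : mono K β ∈ J := by
  have h2 : mono K α * mono K (β - α) = mono K β := by
    rw [mono_mul]; congr 1; funext i; exact Nat.add_sub_cancel' (hle i)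
  rw [← h2]
  exact Ideal.mul_mem_right _ _ h

lemma isMinGen_iff {J : Ideal (MvPolynomial (Fin n) K)} {α : Fin n → ℕ} :
    IsMinGen J α ↔ mono K α ∈ J ∧
      ∀ j, α j ≠ 0 → mono K (α - Pi.single j 1) ∉ J := by
  constructor
  · rintro ⟨hm, hmin⟩
    refine ⟨hm, fun j hj hmem => ?_⟩
    have hle : α - Pi.single j 1 ≤ α := fun k => Nat.sub_le _ _
    have heq := hmin _ hmem hle
    have := congrFun heq j
    simp [Pi.single_apply] at this
    omega
  · rintro ⟨hm, hmin⟩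
    refine ⟨hm, fun β hβ hle => ?_⟩
    by_contra hne
    obtain ⟨j, hj⟩ : ∃ j, β j ≠ α j := by
      by_contra h; push_neg at h; exact hne (funext h)
    have hlt : β j < α j := lt_of_le_of_ne (hle j) hj
    have hle2 : β ≤ α - Pi.single j 1 := by
      intro k
      by_cases hk : k = j
      · subst hk; simp [Pi.single_apply]; omega
      · simp [Pi.single_apply, hk]; exact hle k
    exact hmin j (by omega) (mono_mem_of_le hβ hle2)

lemma mono_d_mem {I : Ideal (MvPolynomial (Fin n) K)} {d : Fin n → ℕ}
    (hμ : ∀ i, mono K (Pi.single i (d i)) ∈ I) (c : Fin n → ℕ) :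
    mono K (fun j => c j * d j) ∈ I ^ (∑ j, c j) := by
  have H : ∀ s : Finset (Fin n),
      mono K (fun j => if j ∈ s then c j * d j else 0) ∈ I ^ (∑ j ∈ s, c j) := by
    intro s
    induction s using Finset.induction with
    | empty =>
      have e : (fun (j : Fin n) => if j ∈ (∅ : Finset (Fin n)) then c j * d j else 0)
          = (0 : Fin n → ℕ) := by funext j; simp
      rw [e, Finset.sum_empty, pow_zero, mono_zero, Ideal.one_eq_top]
      exact Submodule.mem_top
    | @insert a s ha ih =>
      have hsplit : (fun j => if j ∈ insert a s then c j * d j else 0)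
          = (fun j => (c a) * (Pi.single a (d a) : Fin n → ℕ) j)
            + (fun j => if j ∈ s then c j * d j else 0) := by
        funext j
        by_cases hj : j = a
        · subst hj; simp [ha, Pi.single_apply]
        · simp [hj, Pi.single_apply, Finset.mem_insert]
      rw [Finset.sum_insert ha, hsplit, ← mono_mul, pow_add]
      exact Ideal.mul_mem_mul (by rw [← mono_pow]; exact Ideal.pow_mem_pow (hμ a) _) ih
  have e : (fun (j : Fin n) => if j ∈ (Finset.univ : Finset (Fin n)) then c j * d j else 0)
      = fun j => c j * d j := by funext j; simp
  exact e ▸ H Finset.univ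

lemma mem_pow_shift {I : Ideal (MvPolynomial (Fin n) K)} {d : Fin n → ℕ}
    (hμ : ∀ i, mono K (Pi.single i (d i)) ∈ I) {a b : Fin n → ℕ} (hab : a ≤ b)
    {γ : Fin n → ℕ} (h : mono K γ ∈ I ^ ((∑ j, a j) + 1)) :
    mono K (γ + fun j => (b j - a j) * d j) ∈ I ^ ((∑ j, b j) + 1) := by
  have h2 := mono_d_mem hμ (fun j => b j - a j)
  have h3 := Ideal.mul_mem_mul h h2
  rw [← pow_add, mono_mul] at h3
  have hsum : (∑ j, a j) + 1 + (∑ j, (b j - a j)) = (∑ j, b j) + 1 := by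
    have h4 : (∑ j, a j) + (∑ j, (b j - a j)) = ∑ j, b j := by
      rw [← Finset.sum_add_distrib]
      exact Finset.sum_congr rfl (fun j _ => Nat.add_sub_cancel' (hab j))
    omega
  rwa [hsum] at h3

/-- The basic monotone predicates of the box position `a`. -/
def Qp (I : Ideal (MvPolynomial (Fin n) K)) (d σ : Fin n → ℕ) (t : Option (Fin n))
    (a : Fin n → ℕ) : Prop :=
  match t with
  | none => mono K (fun j => σ j + a j * d j) ∈ I ^ ((∑ j, a j) + 1)
  | some j => σ j + a j * d j ≠ 0 ∧
      mono K ((fun k => σ k + a k * d k) - Pi.single j 1) ∈ I ^ ((∑ j, a j) + 1)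

lemma Qp_mono {I : Ideal (MvPolynomial (Fin n) K)} {d : Fin n → ℕ}
    (hμ : ∀ i, mono K (Pi.single i (d i)) ∈ I) (σ : Fin n → ℕ) (t : Option (Fin n))
    {a b : Fin n → ℕ} (hab : a ≤ b) (h : Qp I d σ t a) : Qp I d σ t b := by
  have hmul : ∀ j, a j * d j + (b j - a j) * d j = b j * d j := fun j => by
    rw [← Nat.add_mul, Nat.add_sub_cancel' (hab j)]
  match t with
  | none =>
    have h2 := mem_pow_shift hμ hab h
    have e : ((fun j => σ j + a j * d j) + fun j => (b j - a j) * d j)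
        = fun j => σ j + b j * d j := by
      funext j; simp only [Pi.add_apply]; have := hmul j; omega
    rwa [e] at h2
  | some j =>
    obtain ⟨hpos, h⟩ := h
    have hble : a j * d j ≤ b j * d j := Nat.mul_le_mul_right _ (hab j)
    refine ⟨by omega, ?_⟩
    have h2 := mem_pow_shift hμ hab h
    have e : (((fun k => σ k + a k * d k) - Pi.single j 1) + fun k => (b k - a k) * d k)
        = ((fun k => σ k + b k * d k) - Pi.single j 1) := by
      funext k
      have hmk := hmul k
      by_cases hk : k = j
      · subst hk
        simp only [Pi.add_apply, Pi.sub_apply, Pi.single_eq_same]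
        omega
      · simp only [Pi.add_apply, Pi.sub_apply, Pi.single_eq_of_ne hk]
        omega
    rwa [e] at h2

lemma isMinGen_iff_q {I : Ideal (MvPolynomial (Fin n) K)} {d σ a : Fin n → ℕ} :
    IsMinGen (I ^ ((∑ i, a i) + 1)) (fun j => σ j + a j * d j) ↔
      Qp I d σ none a ∧ ∀ j, ¬ Qp I d σ (some j) a := by
  rw [isMinGen_iff]
  unfold Qp
  simp only [not_and]

lemma boxIdeal_eq (I : Ideal (MvPolynomial (Fin n) K)) (d a : Fin n → ℕ) :
    boxIdeal I d a = Ideal.span (mono K ''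
      {σ | σ ≤ d ∧ IsMinGen (I ^ ((∑ i, a i) + 1)) (fun j => σ j + a j * d j)}) := by
  have hset : ((fun α : Fin n → ℕ => α - fun i => a i * d i) ''
      {α | InBox d a α ∧ IsMinGen (I ^ ((∑ i, a i) + 1)) α})
      = {σ | σ ≤ d ∧ IsMinGen (I ^ ((∑ i, a i) + 1)) (fun j => σ j + a j * d j)} := by
    ext σ
    constructor
    · rintro ⟨α, hα, rfl⟩
      obtain ⟨hbox, hmin⟩ := hα
      constructor
      · intro i
        have h1 := (hbox i).1
        have h2 := (hbox i).2
        have h3 : (a i + 1) * d i = a i * d i + d i := by ring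
        simp only [Pi.sub_apply]
        omega
      · have e : (fun j => (α - fun i => a i * d i) j + a j * d j) = α := by
          funext j
          simp only [Pi.sub_apply]
          have h1 := (hbox j).1
          omega
        rw [e]
        exact hmin
    · rintro ⟨hσd, hmin⟩
      refine ⟨fun j => σ j + a j * d j, ⟨?_, hmin⟩, ?_⟩
      · intro i
        have h1 : σ i ≤ d i := hσd i
        have h3 : (a i + 1) * d i = a i * d i + d i := by ring
        show a i * d i ≤ σ i + a i * d i ∧ σ i + a i * d i ≤ (a i + 1) * d i
        omega
      · funext j
        show (fun j => σ j + a j * d j) j - a j * d j = σ j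
        simp
  unfold boxIdeal
  rw [← hset, ← Set.image_image (g := mono K)
    (f := fun α : Fin n → ℕ => α - fun i => a i * d i)]

lemma exists_cap {P : (Fin n → ℕ) → Prop}
    (hP : ∀ {a b : Fin n → ℕ}, a ≤ b → P a → P b) :
    ∃ N : ℕ, ∀ N' : ℕ, N ≤ N' → ∀ a : Fin n → ℕ, P a ↔ P (fun i => min (a i) N') := by
  classical
  set M : Set (Fin n → ℕ) := {a | P a ∧ ∀ b, P b → b ≤ a → b = a} with hM
  have hanti : IsAntichain (· ≤ ·) M := by
    intro a ha b hb hne hle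
    exact hne (hb.2 a ha.1 hle)
  have hfin : M.Finite := hanti.finite_of_partiallyWellOrderedOn
    (Set.isPWO_of_wellQuasiOrderedLE M)
  set N : ℕ := hfin.toFinset.sup (fun m => Finset.univ.sup m) with hN
  refine ⟨N, fun N' hNN' a => ?_⟩
  constructor
  · intro hPa
    have hfin2 : {b | P b ∧ b ≤ a}.Finite := by
      apply Set.Finite.subset (Set.finite_Icc (0 : Fin n → ℕ) a)
      intro b hb
      exact ⟨fun i => Nat.zero_le _, hb.2⟩
    obtain ⟨m, hmS, hmin⟩ := hfin2.isPWO.exists_minimal ⟨a, hPa, le_refl a⟩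
    have hmM : m ∈ M := by
      refine ⟨hmS.1, fun b hb hble => ?_⟩
      have hbS : b ∈ {b | P b ∧ b ≤ a} := ⟨hb, le_trans hble hmS.2⟩
      exact le_antisymm hble (hmin hbS hble)
    have hbound : ∀ i, m i ≤ N' := by
      intro i
      refine le_trans (le_trans ?_ (Finset.le_sup (f := fun m => Finset.univ.sup m)
        (hfin.mem_toFinset.mpr hmM))) hNN'
      exact Finset.le_sup (Finset.mem_univ i)
    exact hP (fun i => le_min (hmS.2 i) (hbound i)) hmS.1
  · intro h
    exact hP (fun i => min_le_left _ _) h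

/-- The main stabilization result: `boxIdeal I d` is unchanged by capping all
coordinates at a suitable `N`. -/
lemma exists_boxIdeal_cap {I : Ideal (MvPolynomial (Fin n) K)} {d : Fin n → ℕ}
    (hμ : ∀ i, mono K (Pi.single i (d i)) ∈ I) :
    ∃ N : ℕ, ∀ a : Fin n → ℕ, boxIdeal I d a = boxIdeal I d (fun i => min (a i) N) := by
  classical
  have hcap : ∀ (σ : Fin n → ℕ) (t : Option (Fin n)), ∃ N : ℕ, ∀ N' : ℕ, N ≤ N' →
      ∀ a : Fin n → ℕ, Qp I d σ t a ↔ Qp I d σ t (fun i => min (a i) N') :=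
    fun σ t => exists_cap (fun hab h => Qp_mono hμ σ t hab h)
  set boxF : Finset (Fin n → ℕ) := Fintype.piFinset (fun i => Finset.range (d i + 1))
    with hboxF
  set N : ℕ := (boxF ×ˢ (Finset.univ : Finset (Option (Fin n)))).sup
    (fun p => (hcap p.1 p.2).choose) with hNdef
  have key : ∀ σ : Fin n → ℕ, σ ≤ d → ∀ t : Option (Fin n), ∀ a : Fin n → ℕ,
      Qp I d σ t a ↔ Qp I d σ t (fun i => min (a i) N) := by
    intro σ hσ t a
    have hmem : (σ, t) ∈ boxF ×ˢ (Finset.univ : Finset (Option (Fin n))) := by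
      rw [Finset.mem_product]
      refine ⟨?_, Finset.mem_univ _⟩
      rw [hboxF, Fintype.mem_piFinset]
      intro i
      rw [Finset.mem_range]
      exact Nat.lt_succ_of_le (hσ i)
    exact (hcap σ t).choose_spec N
      (Finset.le_sup (f := fun p : (Fin n → ℕ) × Option (Fin n) => (hcap p.1 p.2).choose) hmem) a
  refine ⟨N, fun a => ?_⟩
  rw [boxIdeal_eq, boxIdeal_eq]
  congr 1
  apply congrArg
  ext σ
  simp only [Set.mem_setOf_eq]
  constructor
  · rintro ⟨hσd, hmin⟩
    refine ⟨hσd, ?_⟩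
    rw [isMinGen_iff_q] at hmin ⊢
    exact ⟨(key σ hσd none a).mp hmin.1,
      fun j h => hmin.2 j ((key σ hσd (some j) a).mpr h)⟩
  · rintro ⟨hσd, hmin⟩
    refine ⟨hσd, ?_⟩
    rw [isMinGen_iff_q] at hmin ⊢
    exact ⟨(key σ hσd none a).mpr hmin.1,
      fun j h => hmin.2 j ((key σ hσd (some j) a).mp h)⟩

end Aux


/-- Theorem 5.9: for a good ideal `I` there is a finite partition of `ℕ^n` into
cones such that whenever `a` and `b` lie in the same cone, `I_{a} = I_{b}`. -/
theorem finite_coloring {K : Type*} [Field K] {n : ℕ}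
    (I : Ideal (MvPolynomial (Fin n) K)) (d : Fin n → ℕ)
    (hI : MPrimaryWithCorners I d) (hgood : IsGood I d) :
    ∃ F : Finset (Finset (Fin n) × (Fin n → ℕ)),
      (⋃ c ∈ F, Cone (↑c.1) c.2) = Set.univ ∧
      (∀ c ∈ F, ∀ c' ∈ F, c ≠ c' →
        Disjoint (Cone (↑c.1) c.2) (Cone (↑c'.1) c'.2)) ∧
      ∀ c ∈ F, ∀ a ∈ Cone (↑c.1) c.2, ∀ b ∈ Cone (↑c.1) c.2,
        boxIdeal I d a = boxIdeal I d b := by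
  classical
  obtain ⟨N, hN⟩ := exists_boxIdeal_cap (I := I) (d := d) (fun i => (hI.2.2.2 i).1)
  set Sv : (Fin n → ℕ) → Finset (Fin n) :=
    fun v => Finset.univ.filter (fun i => v i < N) with hSv
  set F : Finset (Finset (Fin n) × (Fin n → ℕ)) :=
    (Fintype.piFinset (fun _ : Fin n => Finset.range (N + 1))).image (fun v => (Sv v, v))
    with hF
  have hconeSelf : ∀ b : Fin n → ℕ,
      b ∈ Cone (↑(Sv (fun i => min (b i) N))) (fun i => min (b i) N) := by
    intro b
    constructor
    · intro i hi
      have hi' : min (b i) N < N := by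
        simpa [hSv] using hi
      have hbi : b i < N := by
        rcases le_or_gt N (b i) with h | h
        · rw [min_eq_right h] at hi'; omega
        · exact h
      simp [min_eq_left (le_of_lt hbi)]
    · intro i _
      exact min_le_left _ _
  have hcapmem : ∀ b : Fin n → ℕ,
      (fun i => min (b i) N) ∈ Fintype.piFinset (fun _ : Fin n => Finset.range (N + 1)) := by
    intro b
    rw [Fintype.mem_piFinset]
    intro i
    rw [Finset.mem_range]
    exact Nat.lt_succ_of_le (min_le_right _ _)
  have huniq : ∀ v : Fin n → ℕ, (∀ i, v i ≤ N) →
      ∀ b ∈ Cone (↑(Sv v)) v, (fun i => min (b i) N) = v := by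
    intro v hvN b hb
    funext i
    by_cases hv : v i < N
    · have hmemS : i ∈ Sv v := by simp [hSv, hv]
      have hbi : b i = v i := hb.1 i (Finset.mem_coe.mpr hmemS)
      rw [hbi, min_eq_left (le_of_lt hv)]
    · have hvi : v i = N := le_antisymm (hvN i) (not_lt.mp hv)
      have hnmem : i ∉ Sv v := by simp [hSv, hv]
      have hle : v i ≤ b i := hb.2 i (fun hmem => hnmem (Finset.mem_coe.mp hmem))
      rw [min_eq_right (by omega), hvi]
  have hbnd : ∀ v : Fin n → ℕ,
      v ∈ Fintype.piFinset (fun _ : Fin n => Finset.range (N + 1)) → ∀ i, v i ≤ N := by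
    intro v hv i
    have := Fintype.mem_piFinset.mp hv i
    rw [Finset.mem_range] at this
    omega
  refine ⟨F, ?_, ?_, ?_⟩
  · apply Set.eq_univ_iff_forall.mpr
    intro b
    refine Set.mem_iUnion₂.mpr ⟨(Sv (fun i => min (b i) N), fun i => min (b i) N), ?_, ?_⟩
    · rw [hF]
      exact Finset.mem_image.mpr ⟨_, hcapmem b, rfl⟩
    · exact hconeSelf b
  · intro c hc c' hc' hne
    rw [Set.disjoint_left]
    intro b hb hb'
    have hc2 : c ∈ (Fintype.piFinset (fun _ : Fin n => Finset.range (N + 1))).image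
        (fun v => (Sv v, v)) := by rwa [hF] at hc
    have hc2' : c' ∈ (Fintype.piFinset (fun _ : Fin n => Finset.range (N + 1))).image
        (fun v => (Sv v, v)) := by rwa [hF] at hc'
    obtain ⟨v, hv, hcv⟩ := Finset.mem_image.mp hc2
    obtain ⟨w, hw, hcw⟩ := Finset.mem_image.mp hc2'
    have hb1 : b ∈ Cone (↑(Sv v)) v := by rw [← hcv] at hb; exact hb
    have hb2 : b ∈ Cone (↑(Sv w)) w := by rw [← hcw] at hb'; exact hb'
    have hvw : v = w := (huniq v (hbnd v hv) b hb1).symm.trans (huniq w (hbnd w hw) b hb2)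
    apply hne
    rw [← hcv, ← hcw, hvw]
  · intro c hc a ha b hb
    have hc2 : c ∈ (Fintype.piFinset (fun _ : Fin n => Finset.range (N + 1))).image
        (fun v => (Sv v, v)) := by rwa [hF] at hc
    obtain ⟨v, hv, hcv⟩ := Finset.mem_image.mp hc2
    have ha1 : a ∈ Cone (↑(Sv v)) v := by rw [← hcv] at ha; exact ha
    have hb1 : b ∈ Cone (↑(Sv v)) v := by rw [← hcv] at hb; exact hb
    have h1 : (fun i => min (a i) N) = v := huniq v (hbnd v hv) a ha1
    have h2 : (fun i => min (b i) N) = v := huniq v (hbnd v hv) b hb1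
    calc boxIdeal I d a = boxIdeal I d (fun i => min (a i) N) := hN a
      _ = boxIdeal I d (fun i => min (b i) N) := by rw [h1, h2]
      _ = boxIdeal I d b := (hN b).symm

end GasanovaRR
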